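/- Let p ≥ 3, q ≥ 2. For regular λ ∈ ℤ + (p+q)/2 and regular μ ∈ ℤ + (p+q-1)/2, the following are equivalent: (i) μ = λ + n + 1/2 for some n ∈ ℕ; (ii) the interlacing property μ > λ > (p+q-4)/2 > (p+q-6)/2 > ⋯ > κ(p+q) holds, where κ(m) = 0 if m is even and 1/2 if m is odd. -/

import Mathlib

lemma coe_list_nat (l : List ℕ) : ((l : List ℕ) : List ℝ) = l.map Nat.cast := by
  induction l with
  | nil => rfl
  | cons a t ih => simp_all

lemma chain_range_map (N : ℕ) (c : ℝ) :
    List.Chain' (· > ·) ((List.range N).map (fun i => c - (i : ℝ))) := by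
  unfold List.Chain'
  rw [coe_list_nat, List.map_map, List.isChain_map]
  cases N with
  | zero => simp
  | succ n =>
    rw [List.isChain_range_succ]
    intro m hm
    simp only [Function.comp]
    push_cast
    linarith

/-- Discretely decomposable branching, Version 2: for regular `λ` and `μ`,
`μ = λ + n + 1/2` for some `n ∈ ℕ` iff the interlacing property
`μ > λ > (p+q-4)/2 > (p+q-6)/2 > ⋯ > κ(p+q)` holds. -/
theorem stmt12 (p q : ℕ) (hp : 3 ≤ p) (hq : 2 ≤ q) (lam mu : ℝ)
    (hlam : ∃ k : ℤ, lam = k + ((p : ℝ) + q) / 2)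
    (hlamreg : ((p : ℝ) + q - 2) / 2 ≤ lam)
    (hmu : ∃ k : ℤ, mu = k + ((p : ℝ) + q - 1) / 2)
    (hmureg : ((p : ℝ) + q - 3) / 2 ≤ mu)
    (tail : List ℝ)
    (htail : tail = (List.range ((p + q - 2) / 2)).map
      (fun i => ((p : ℝ) + q - 4) / 2 - i)) :
    (∃ n : ℕ, mu = lam + n + 1 / 2) ↔
      List.Chain' (· > ·) (mu :: lam :: tail) := by
  obtain ⟨a, ha⟩ := hlam
  obtain ⟨b, hb⟩ := hmu
  have htail' : tail = (List.range ((p + q - 2) / 2)).map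
      (fun i : ℕ => ((p : ℝ) + q - 4) / 2 - (i : ℝ)) := by
    rw [htail, coe_list_nat, List.map_map]; rfl
  constructor
  · rintro ⟨n, hn⟩
    unfold List.Chain'
    rw [List.isChain_cons_cons]
    refine ⟨?_, ?_⟩
    · have : (0:ℝ) ≤ n := Nat.cast_nonneg n
      linarith
    · rw [List.isChain_cons]
      refine ⟨?_, htail ▸ chain_range_map _ _⟩
      intro y hy
      have hy' : y ∈ tail := List.mem_of_mem_head? hy
      rw [htail'] at hy'
      obtain ⟨i, _, hi⟩ := List.mem_map.mp hy'
      have : (0:ℝ) ≤ i := Nat.cast_nonneg i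
      have : y ≤ ((p : ℝ) + q - 4) / 2 := by rw [← hi]; linarith
      linarith
  · intro h
    have hgt : mu > lam := (List.isChain_cons_cons.mp h).1
    rw [ha, hb] at hgt
    have hd : (1 : ℤ) ≤ b - a := by
      by_contra hc
      push_neg at hc
      have hba : (b : ℝ) ≤ a := by exact_mod_cast (by omega : b ≤ a)
      push_cast at hgt
      linarith
    refine ⟨(b - a - 1).toNat, ?_⟩
    have hcast : ((b - a - 1).toNat : ℝ) = (b : ℝ) - a - 1 := by
      have h0 := Int.toNat_of_nonneg (by omega : (0:ℤ) ≤ b - a - 1)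
      exact_mod_cast congrArg (Int.cast : ℤ → ℝ) h0
    rw [ha, hb, hcast]
    push_cast
    ring
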